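/- Let S be a multiset of 13 points in F_5^4 \ {0} such that every hyperplane through the origin (i.e., every 3-dimensional subspace) contains exactly 1, 3, or 6 points of S (counted with multiplicity). Then no 2-dimensional subspace of F_5^4 contains two or more points of S. -/

import Mathlib

private def psi5 (w : Fin 2 → ZMod 5) : (Fin 2 → ZMod 5) →ₗ[ZMod 5] ZMod 5 where
  toFun q := w 0 * q 0 + w 1 * q 1
  map_add' x y := by simp [Pi.add_apply]; ring
  map_smul' c x := by simp [Pi.smul_apply, smul_eq_mul]; ring

private def wv5 : Option (ZMod 5) → (Fin 2 → ZMod 5)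
  | none => ![0, 1]
  | some t => ![1, t]

private lemma psi5_apply (w q : Fin 2 → ZMod 5) : psi5 w q = w 0 * q 0 + w 1 * q 1 := rfl

private lemma key1 : ∀ q : Fin 2 → ZMod 5, q ≠ 0 →
    (Finset.univ.filter fun i : Option (ZMod 5) => wv5 i 0 * q 0 + wv5 i 1 * q 1 = 0).card = 1 := by
  decide

private lemma key2 : ∀ i : Option (ZMod 5), ∃ q : Fin 2 → ZMod 5,
    wv5 i 0 * q 0 + wv5 i 1 * q 1 = 1 := by decide

private lemma sum_card_filter {α ι : Type*} [Fintype ι] (S : Multiset α) (p : ι → α → Prop)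
    [∀ i a, Decidable (p i a)] :
    ∑ i : ι, Multiset.card (S.filter (p i)) =
      (S.map (fun x => (Finset.univ.filter (fun i => p i x)).card)).sum := by
  induction S using Multiset.induction with
  | empty => simp
  | cons a s ih =>
    simp only [Multiset.filter_cons, Multiset.card_add, Multiset.map_cons, Multiset.sum_cons,
      Finset.sum_add_distrib, ih, Finset.card_filter]
    congr 1
    refine Finset.sum_congr rfl fun i _ => ?_
    split <;> simp

private lemma sum_aff {α : Type*} (S : Multiset α) (p : α → Prop) [DecidablePred p] :
    (S.map (fun x => 5 * (if p x then (1:ℕ) else 0) + 1)).sum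
      = 5 * Multiset.card (S.filter p) + Multiset.card S := by
  induction S using Multiset.induction with
  | empty => simp
  | cons a s ih =>
    simp only [Multiset.map_cons, Multiset.sum_cons, Multiset.filter_cons, Multiset.card_add,
      Multiset.card_cons, ih]
    split <;> simp <;> ring

open scoped Classical in
/-- Let `S` be a multiset of 13 points in `F_5^4 \ {0}` such that every hyperplane
through the origin (3-dimensional subspace) contains exactly `1`, `3`, or `6` points of
`S` (with multiplicity). Then no 2-dimensional subspace of `F_5^4` contains two or more
points of `S`. -/
theorem multiset_13_points_no_heavy_plane (S : Multiset (Fin 4 → ZMod 5))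
    (hcard : Multiset.card S = 13)
    (h0 : ∀ x ∈ S, x ≠ 0)
    (hH : ∀ H : Submodule (ZMod 5) (Fin 4 → ZMod 5), Module.finrank (ZMod 5) H = 3 →
      Multiset.card (S.filter (· ∈ H)) ∈ ({1, 3, 6} : Set ℕ)) :
    ∀ P : Submodule (ZMod 5) (Fin 4 → ZMod 5), Module.finrank (ZMod 5) P = 2 →
      Multiset.card (S.filter (· ∈ P)) ≤ 1 := by
  haveI : Fact (Nat.Prime 5) := ⟨by norm_num⟩
  intro P hP
  by_contra hab
  push_neg at hab
  set a := Multiset.card (S.filter (· ∈ P)) with ha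
  have hV : Module.finrank (ZMod 5) (Fin 4 → ZMod 5) = 4 :=
    Module.finrank_fin_fun (ZMod 5)
  have hQ : Module.finrank (ZMod 5) ((Fin 4 → ZMod 5) ⧸ P) = 2 := by
    have h := Submodule.finrank_quotient_add_finrank P
    rw [hV, hP] at h; omega
  have hQ2 : Module.finrank (ZMod 5) (Fin 2 → ZMod 5) = 2 :=
    Module.finrank_fin_fun (ZMod 5)
  set e : ((Fin 4 → ZMod 5) ⧸ P) ≃ₗ[ZMod 5] (Fin 2 → ZMod 5) :=
    LinearEquiv.ofFinrankEq _ _ (hQ.trans hQ2.symm) with he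
  set f : (Fin 4 → ZMod 5) →ₗ[ZMod 5] (Fin 2 → ZMod 5) := e.toLinearMap ∘ₗ P.mkQ with hf
  have hfP : ∀ x, f x = 0 ↔ x ∈ P := by
    intro x
    rw [hf, LinearMap.comp_apply, LinearEquiv.coe_coe, e.map_eq_zero_iff,
      Submodule.mkQ_apply, Submodule.Quotient.mk_eq_zero]
  have fsurj : Function.Surjective f := e.surjective.comp P.mkQ_surjective
  set b : Option (ZMod 5) → ℕ :=
    fun i => Multiset.card (S.filter (fun x => psi5 (wv5 i) (f x) = 0)) with hbdef
  have hb : ∀ i : Option (ZMod 5), (b i = 1 ∨ b i = 3 ∨ b i = 6) ∧ a ≤ b i := by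
    intro i
    have hsurj : Function.Surjective ((psi5 (wv5 i)).comp f) := by
      intro c
      obtain ⟨q, hq⟩ := key2 i
      obtain ⟨x, hx⟩ := fsurj (c • q)
      refine ⟨x, ?_⟩
      rw [LinearMap.comp_apply, hx, map_smul, smul_eq_mul, psi5_apply, hq, mul_one]
    have hker : Module.finrank (ZMod 5) (LinearMap.ker ((psi5 (wv5 i)).comp f)) = 3 := by
      have h := LinearMap.finrank_range_add_finrank_ker ((psi5 (wv5 i)).comp f)
      rw [LinearMap.range_eq_top.mpr hsurj, finrank_top, hV, Module.finrank_self] at h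
      omega
    have hfil : S.filter (fun x => psi5 (wv5 i) (f x) = 0)
        = S.filter (· ∈ LinearMap.ker ((psi5 (wv5 i)).comp f)) :=
      Multiset.filter_congr (fun x _ => by simp [LinearMap.mem_ker])
    constructor
    · rw [hbdef]; dsimp only; rw [hfil]
      simpa using hH _ hker
    · rw [hbdef]; dsimp only; rw [hfil, ha]
      apply Multiset.card_le_card
      apply Multiset.monotone_filter_right
      intro x hx
      have hfx : f x = 0 := (hfP x).mpr hx
      simp [LinearMap.mem_ker, hfx]
  have hsum : ∑ i : Option (ZMod 5), b i = 13 + 5 * a := by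
    rw [hbdef]
    rw [sum_card_filter S (fun i x => psi5 (wv5 i) (f x) = 0)]
    have hcong : ∀ x ∈ S,
        (Finset.univ.filter (fun i : Option (ZMod 5) => psi5 (wv5 i) (f x) = 0)).card
        = 5 * (if x ∈ P then (1:ℕ) else 0) + 1 := by
      intro x hx
      by_cases hxP : x ∈ P
      · have hfx : f x = 0 := (hfP x).mpr hxP
        rw [if_pos hxP]
        rw [Finset.filter_true_of_mem (fun i _ => by simp [hfx])]
        simp [Finset.card_univ]
      · have hf0 : f x ≠ 0 := fun h => hxP ((hfP x).mp h)
        rw [if_neg hxP, mul_zero, zero_add]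
        have := key1 (f x) hf0
        simp only [psi5_apply]
        convert this using 2
        ext i
        exact Finset.mem_filter.trans (by simp)
    rw [Multiset.map_congr rfl hcong, sum_aff, ← ha, hcard]
    omega
  -- arithmetic conclusion
  have h3 : ∀ i, 3 ∣ b i := by
    intro i
    obtain ⟨hmem, hge⟩ := hb i
    omega
  have hdvd : (3:ℕ) ∣ 13 + 5 * a := hsum ▸ Finset.dvd_sum (fun i _ => h3 i)
  have hub : 13 + 5 * a ≤ 36 := by
    rw [← hsum]
    calc ∑ i : Option (ZMod 5), b i ≤ ∑ _i : Option (ZMod 5), 6 :=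
          Finset.sum_le_sum (fun i _ => by
            obtain ⟨hmem, _⟩ := hb i
            omega)
      _ = 36 := by simp [Finset.card_univ]
  have ha4 : a = 4 := by omega
  have hb6 : ∀ i, b i = 6 := by
    intro i
    obtain ⟨hmem, hge⟩ := hb i
    omega
  have : ∑ i : Option (ZMod 5), b i = 36 := by
    rw [Finset.sum_congr rfl (fun i _ => hb6 i)]
    simp [Finset.card_univ]
  omega
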